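/- Let F with F(0)=0, F(x+1)=F(x)+m (m > 1 an integer) be an increasing homeomorphism of ℝ, and H, H' two increasing homeomorphisms of ℝ with H(0)=H'(0)=0, H(x+1)=H(x)+1, H'(x+1)=H'(x)+1, and H(mx)=F(H(x)), H'(mx)=F(H'(x)) for all x. Then H = H'. -/

import Mathlib

lemma intfix (H : ℝ → ℝ) (H0 : H 0 = 0) (Hper : ∀ x : ℝ, H (x + 1) = H x + 1) :
    ∀ k : ℤ, H (k : ℝ) = k := by
  intro k
  induction k using Int.induction_on with
  | zero => simpa using H0
  | succ n ih => push_cast; rw [Hper]; push_cast at ih; rw [ih]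
  | pred n ih =>
      have := Hper ((-(n:ℝ) - 1))
      push_cast at ih ⊢
      rw [show (-(n:ℝ) - 1 + 1) = -(n:ℝ) by ring] at this
      linarith

/-- Uniqueness of the conjugacy: two increasing homeomorphisms H, H' of ℝ
fixing 0, commuting with x ↦ x+1 and conjugating P(x)=mx to F must coincide. -/
theorem stmt15 (m : ℕ) (hm : 1 < m) (F : ℝ → ℝ)
    (Fmono : StrictMono F) (Fcont : Continuous F) (Fsurj : Function.Surjective F)
    (F0 : F 0 = 0) (Fcomm : ∀ x : ℝ, F (x + 1) = F x + m)
    (H H' : ℝ → ℝ)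
    (Hmono : StrictMono H) (Hcont : Continuous H) (Hsurj : Function.Surjective H)
    (H'mono : StrictMono H') (H'cont : Continuous H') (H'surj : Function.Surjective H')
    (H0 : H 0 = 0) (H'0 : H' 0 = 0)
    (Hper : ∀ x : ℝ, H (x + 1) = H x + 1) (H'per : ∀ x : ℝ, H' (x + 1) = H' x + 1)
    (Hconj : ∀ x : ℝ, H (m * x) = F (H x)) (H'conj : ∀ x : ℝ, H' (m * x) = F (H' x)) :
    H = H' := by
  have hm0 : (0:ℝ) < m := by positivity
  have key : ∀ n : ℕ, ∀ k : ℤ, H ((k : ℝ) / m ^ n) = H' ((k : ℝ) / m ^ n) := by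
    intro n
    induction n with
    | zero =>
        intro k
        simp [intfix H H0 Hper k, intfix H' H'0 H'per k]
    | succ n ih =>
        intro k
        apply Fmono.injective
        rw [← Hconj, ← H'conj]
        have : (m : ℝ) * ((k : ℝ) / m ^ (n + 1)) = (k : ℝ) / m ^ n := by
          field_simp; ring
        rw [this, ih k]
  have hdense : Dense {x : ℝ | ∃ k : ℤ, ∃ n : ℕ, x = (k : ℝ) / m ^ n} := by
    rw [dense_iff_exists_between]
    intro a b hab
    obtain ⟨n, hn⟩ := exists_pow_lt_of_lt_one (sub_pos.2 hab)
      (show (1 : ℝ) / m < 1 by rw [div_lt_one hm0]; exact_mod_cast hm)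
    have hmn : (0:ℝ) < (m:ℝ) ^ n := by positivity
    refine ⟨(↑(⌊a * m ^ n⌋ + 1) : ℝ) / m ^ n, ⟨_, n, rfl⟩, ?_, ?_⟩
    · rw [lt_div_iff₀ hmn]
      push_cast
      have := Int.lt_floor_add_one (a * m ^ n)
      linarith
    · rw [div_lt_iff₀ hmn]
      push_cast
      have h1 : (⌊a * m ^ n⌋ : ℝ) ≤ a * m ^ n := Int.floor_le _
      have h2 : ((1:ℝ)/m) ^ n * m ^ n = 1 := by
        rw [div_pow, one_pow, div_mul_cancel₀ _ hmn.ne']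
      nlinarith [hn, hmn]
  refine Continuous.ext_on hdense Hcont H'cont ?_
  rintro x ⟨k, n, rfl⟩
  exact key n k
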